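/- Let φ(x) = x/√(x²+1) and n_s ≥ 3. Let Ŵ₁ ∈ ℝ^{d_x×N}, b̂₁ ∈ ℝ^N, Ŵ₂ ∈ ℝ^{N×d_y}, b̂₂ ∈ ℝ^{d_y}, and for every sequence length s ≥ 1 define the position-wise feed-forward map f̂(X) = φ(X Ŵ₁ + 𝟙_s b̂₁ᵀ) Ŵ₂ + 𝟙_s b̂₂ᵀ for X ∈ ℝ^{s×d_x}, where φ is applied entrywise and 𝟙_s ∈ ℝ^s is the all-ones vector. Then there exist W₁ ∈ ℝ^{d_x×n_s N}, b₁ ∈ ℝ^{n_s N}, W₂ ∈ ℝ^{n_s N×d_y}, b₂ ∈ ℝ^{d_y} such that for every s ≥ 1 and every X ∈ ℝ^{s×d_x}, PLN(n_s) applied to each row of X W₁ + 𝟙_s b₁ᵀ, followed by right-multiplication by W₂ and addition of 𝟙_s b₂ᵀ, equals f̂(X) exactly. -/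

import Mathlib

/-- Layer normalization on `ℝ^n`: `LN(h)ⱼ = (hⱼ − μ)/σ` when `σ ≠ 0`, and `0` when `σ = 0`. -/
noncomputable def LN {n : ℕ} (h : Fin n → ℝ) : Fin n → ℝ :=
  let μ : ℝ := (∑ i, h i) / n
  let σ : ℝ := Real.sqrt ((∑ i, (h i - μ) ^ 2) / n)
  if σ = 0 then 0 else fun j => (h j - μ) / σ

/-- Parallel layer normalization: `N` consecutive blocks of size `ns`, `LN` on each. -/
noncomputable def PLN (ns N : ℕ) (h : Fin (N * ns) → ℝ) : Fin (N * ns) → ℝ :=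
  fun i => LN (fun j : Fin ns => h (finProdFinEquiv (i.divNat, j))) i.modNat

/-- The activation function `φ(x) = x/√(x²+1)`. -/
noncomputable def phi (x : ℝ) : ℝ := x / Real.sqrt (x ^ 2 + 1)

/- Auxiliary material -/

noncomputable def pvec (ns : ℕ) (j : Fin ns) : ℝ :=
  if (j : ℕ) = 0 then 1 else if (j : ℕ) = 1 then -(1/2) else if (j : ℕ) = 2 then -(1/2) else 0

noncomputable def qvec (ns : ℕ) (j : Fin ns) : ℝ :=
  if (j : ℕ) = 1 then Real.sqrt 3 / 2 else if (j : ℕ) = 2 then -(Real.sqrt 3 / 2) else 0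

lemma sum_fin_three (ns : ℕ) (hns : 3 ≤ ns) (g : ℕ → ℝ) (hg : ∀ i, 3 ≤ i → g i = 0) :
    ∑ j : Fin ns, g (j : ℕ) = g 0 + g 1 + g 2 := by
  rw [Fin.sum_univ_eq_sum_range]
  rw [← Finset.sum_subset (Finset.range_subset_range.2 hns)]
  · simp [Finset.sum_range_succ]
  · intro i _ hi
    exact hg i (by simpa using hi)

lemma key_sums (ns : ℕ) (hns : 3 ≤ ns) :
    (∑ j : Fin ns, pvec ns j = 0) ∧ (∑ j : Fin ns, qvec ns j = 0) ∧
    (∑ j : Fin ns, (pvec ns j) ^ 2 = 3 / 2) ∧ (∑ j : Fin ns, (qvec ns j) ^ 2 = 3 / 2) ∧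
    (∑ j : Fin ns, pvec ns j * qvec ns j = 0) := by
  have h3 : Real.sqrt 3 ^ 2 = 3 := Real.sq_sqrt (by norm_num)
  refine ⟨?_, ?_, ?_, ?_, ?_⟩
  · have h := sum_fin_three ns hns
      (fun i : ℕ => if i = 0 then (1:ℝ) else if i = 1 then -(1/2) else if i = 2 then -(1/2) else 0)
      (by intro i hi; rw [if_neg (by omega), if_neg (by omega), if_neg (by omega)])
    exact h.trans (by norm_num)
  · have h := sum_fin_three ns hns
      (fun i : ℕ => if i = 1 then Real.sqrt 3 / 2 else if i = 2 then -(Real.sqrt 3 / 2) else 0)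
      (by intro i hi; rw [if_neg (by omega), if_neg (by omega)])
    exact h.trans (by norm_num)
  · have h := sum_fin_three ns hns
      (fun i : ℕ => (if i = 0 then (1:ℝ) else if i = 1 then -(1/2) else if i = 2 then -(1/2) else 0) ^ 2)
      (by intro i hi; rw [if_neg (by omega), if_neg (by omega), if_neg (by omega)]; norm_num)
    exact h.trans (by norm_num)
  · have h := sum_fin_three ns hns
      (fun i : ℕ => (if i = 1 then Real.sqrt 3 / 2 else if i = 2 then -(Real.sqrt 3 / 2) else 0) ^ 2)
      (by intro i hi; rw [if_neg (by omega), if_neg (by omega)]; norm_num)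
    refine h.trans ?_
    norm_num [div_pow, h3]
  · have h := sum_fin_three ns hns
      (fun i : ℕ => (if i = 0 then (1:ℝ) else if i = 1 then -(1/2) else if i = 2 then -(1/2) else 0)
        * (if i = 1 then Real.sqrt 3 / 2 else if i = 2 then -(Real.sqrt 3 / 2) else 0))
      (by intro i hi
          have h0 : i ≠ 0 := by omega
          have h1 : i ≠ 1 := by omega
          have h2 : i ≠ 2 := by omega
          simp [h0, h1, h2])
    refine h.trans ?_
    norm_num

lemma LN_key (ns : ℕ) (hns : 3 ≤ ns) (z : ℝ) :
    LN (fun j : Fin ns => pvec ns j * z + qvec ns j) ⟨0, by omega⟩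
      = Real.sqrt (2 * ns / 3) * phi z := by
  obtain ⟨hp, hq, hp2, hq2, hpq⟩ := key_sums ns hns
  have hμ : (∑ j : Fin ns, (pvec ns j * z + qvec ns j)) / (ns : ℝ) = 0 := by
    rw [show (∑ j : Fin ns, (pvec ns j * z + qvec ns j))
      = (∑ j : Fin ns, pvec ns j) * z + ∑ j : Fin ns, qvec ns j by
        rw [Finset.sum_add_distrib, Finset.sum_mul]]
    rw [hp, hq]; simp
  have hsq : (∑ j : Fin ns, (pvec ns j * z + qvec ns j - 0) ^ 2)
      = 3 / 2 * (z ^ 2 + 1) := by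
    have he : ∀ j : Fin ns, (pvec ns j * z + qvec ns j - 0) ^ 2
        = (pvec ns j) ^ 2 * z ^ 2 + 2 * z * (pvec ns j * qvec ns j) + (qvec ns j) ^ 2 := by
      intro j; ring
    rw [Finset.sum_congr rfl (fun j _ => he j)]
    rw [Finset.sum_add_distrib, Finset.sum_add_distrib, ← Finset.sum_mul, ← Finset.mul_sum]
    rw [hp2, hq2, hpq]; ring
  have hnspos : (0:ℝ) < ns := by
    have : (0:ℕ) < ns := by omega
    exact_mod_cast this
  have hz1 : (0:ℝ) < z ^ 2 + 1 := by positivity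
  have hinner : (3 / 2 * (z ^ 2 + 1)) / (ns : ℝ) = (z ^ 2 + 1) * (3 / (2 * ns)) := by
    field_simp
  have hσpos : 0 < Real.sqrt ((3 / 2 * (z ^ 2 + 1)) / (ns : ℝ)) := by
    apply Real.sqrt_pos.2; positivity
  simp only [LN]
  rw [hμ, hsq]
  rw [if_neg (ne_of_gt hσpos)]
  have hz0 : (0:ℕ) < ns := by omega
  have hval : pvec ns (⟨0, hz0⟩ : Fin ns) = 1 := by simp [pvec]
  have hqval : qvec ns (⟨0, hz0⟩ : Fin ns) = 0 := by simp [qvec]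
  simp only [hval, hqval]
  rw [hinner, Real.sqrt_mul (le_of_lt hz1)]
  unfold phi
  have hs1 : Real.sqrt (z ^ 2 + 1) ≠ 0 := by positivity
  have hs2 : Real.sqrt (3 / (2 * (ns:ℝ))) ≠ 0 := by positivity
  have hmul : Real.sqrt (2 * (ns:ℝ) / 3) * Real.sqrt (3 / (2 * (ns:ℝ))) = 1 := by
    rw [← Real.sqrt_mul (by positivity)]
    rw [show 2 * (ns:ℝ) / 3 * (3 / (2 * ns)) = 1 by field_simp]
    exact Real.sqrt_one
  field_simp
  linear_combination (-z) * hmul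

lemma divNat_enc {N ns : ℕ} (b : Fin N) (j : Fin ns) :
    (finProdFinEquiv (b, j)).divNat = b := by
  have h := finProdFinEquiv.symm_apply_apply (b, j)
  simpa [finProdFinEquiv] using congrArg Prod.fst h

lemma modNat_enc {N ns : ℕ} (b : Fin N) (j : Fin ns) :
    (finProdFinEquiv (b, j)).modNat = j := by
  have h := finProdFinEquiv.symm_apply_apply (b, j)
  simpa [finProdFinEquiv] using congrArg Prod.snd h

theorem PLN_represents_positionwise_FFN (ns N dx dy : ℕ) (hns : 3 ≤ ns)
    (Wh₁ : Matrix (Fin dx) (Fin N) ℝ) (bh₁ : Fin N → ℝ)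
    (Wh₂ : Matrix (Fin N) (Fin dy) ℝ) (bh₂ : Fin dy → ℝ) :
    ∃ (W₁ : Matrix (Fin dx) (Fin (N * ns)) ℝ) (b₁ : Fin (N * ns) → ℝ)
      (W₂ : Matrix (Fin (N * ns)) (Fin dy) ℝ) (b₂ : Fin dy → ℝ),
      ∀ (s : ℕ), 1 ≤ s → ∀ X : Matrix (Fin s) (Fin dx) ℝ,
        (Matrix.of fun (r : Fin s) (j : Fin (N * ns)) =>
            PLN ns N (fun c => (X * W₁) r c + b₁ c) j) * W₂ +
          Matrix.of (fun (_ : Fin s) (j : Fin dy) => b₂ j)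
        = (Matrix.of fun (r : Fin s) (i : Fin N) => phi ((X * Wh₁) r i + bh₁ i)) * Wh₂ +
            Matrix.of (fun (_ : Fin s) (j : Fin dy) => bh₂ j) := by
  have hnspos : (0:ℝ) < (ns : ℝ) := by
    have : (0:ℕ) < ns := by omega
    exact_mod_cast this
  have hc : Real.sqrt (2 * (ns:ℝ) / 3) ≠ 0 := by positivity
  refine ⟨Matrix.of (fun k c => Wh₁ k c.divNat * pvec ns c.modNat),
    fun c => bh₁ c.divNat * pvec ns c.modNat + qvec ns c.modNat,
    Matrix.of (fun c l => if (c.modNat : ℕ) = 0 then Wh₂ c.divNat l / Real.sqrt (2 * ns / 3) else 0),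
    bh₂, ?_⟩
  intro s _ X
  ext r l
  simp only [Matrix.add_apply]
  rw [Matrix.mul_apply, Matrix.mul_apply]
  simp only [Matrix.of_apply]
  congr 1
  rw [← Equiv.sum_comp (finProdFinEquiv : Fin N × Fin ns ≃ Fin (N * ns))]
  rw [Fintype.sum_prod_type]
  have hz0 : (0:ℕ) < ns := by omega
  refine Finset.sum_congr rfl (fun b _ => ?_)
  rw [Finset.sum_eq_single (⟨0, hz0⟩ : Fin ns)]
  · rw [modNat_enc, divNat_enc]
    simp only [if_pos rfl]
    have hPLN : PLN ns N (fun c =>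
        (X * Matrix.of (fun k c => Wh₁ k c.divNat * pvec ns c.modNat)) r c +
          (bh₁ c.divNat * pvec ns c.modNat + qvec ns c.modNat)) (finProdFinEquiv (b, ⟨0, hz0⟩))
        = Real.sqrt (2 * ns / 3) * phi ((X * Wh₁) r b + bh₁ b) := by
      unfold PLN
      rw [modNat_enc, divNat_enc]
      have harg : (fun j : Fin ns =>
          (X * Matrix.of (fun k c => Wh₁ k c.divNat * pvec ns c.modNat)) r (finProdFinEquiv (b, j)) +
          (bh₁ (finProdFinEquiv (b, j)).divNat * pvec ns (finProdFinEquiv (b, j)).modNat +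
            qvec ns (finProdFinEquiv (b, j)).modNat))
          = fun j : Fin ns => pvec ns j * ((X * Wh₁) r b + bh₁ b) + qvec ns j := by
        funext j
        have hXW : (X * Matrix.of (fun k c => Wh₁ k c.divNat * pvec ns c.modNat)) r
            (finProdFinEquiv (b, j)) = (X * Wh₁) r b * pvec ns j := by
          simp only [Matrix.mul_apply, Matrix.of_apply, divNat_enc, modNat_enc, ← mul_assoc]
          rw [← Finset.sum_mul]
        rw [hXW, divNat_enc, modNat_enc]
        ring
      rw [harg]
      exact LN_key ns hns ((X * Wh₁) r b + bh₁ b)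
    rw [hPLN]
    simp only [Fin.val_mk, eq_self_iff_true, if_true]
    field_simp
  · intro j _ hj
    rw [modNat_enc]
    have : (j : ℕ) ≠ 0 := fun h => hj (Fin.ext h)
    rw [if_neg this, mul_zero]
  · intro h; exact absurd (Finset.mem_univ _) h
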